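/- Let S and T be operator systems and φ : S → T a linear map. Then φ is k-positive if and only if its Banach-space adjoint φᵈ : Tᵈ → Sᵈ is k-positive with respect to the dual matrix orderings. -/

import Mathlib

open scoped ComplexOrder TensorProduct

noncomputable section

/-- A family of matrix cones over `V`, one in each matrix level `Mₙ(V)`. -/
def ConeFam (V : Type*) : Type _ :=
  ∀ n : ℕ, Set (Matrix (Fin n) (Fin n) V)

/-- Entrywise application of a linear map to a matrix (the `n`-th amplification). -/
def mmap {V W : Type*} [AddCommGroup V] [Module ℂ V] [AddCommGroup W] [Module ℂ W]
    {n : ℕ} (φ : V →ₗ[ℂ] W) (M : Matrix (Fin n) (Fin n) V) : Matrix (Fin n) (Fin n) W :=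
  M.map fun v => φ v

/-- Scalar congruence `A⋆ M A` of a `V`-valued matrix by a scalar matrix. -/
def matCongr {V : Type*} [AddCommGroup V] [Module ℂ V] {m n : ℕ}
    (A : Matrix (Fin m) (Fin n) ℂ) (M : Matrix (Fin m) (Fin m) V) :
    Matrix (Fin n) (Fin n) V :=
  Matrix.of fun i j => ∑ k, ∑ l, (star (A k i) * A l j) • M k l

/-- The diagonal matrix with constant diagonal entry `e`. -/
def unitMat {V : Type*} [AddCommGroup V] [Module ℂ V] (e : V) (n : ℕ) :
    Matrix (Fin n) (Fin n) V :=
  Matrix.of fun i j => if i = j then e else 0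

/-- An abstract operator system: a matrix ordered `*`-vector space together with an
Archimedean matrix order unit (Choi–Effros axioms). -/
structure OSStruct (V : Type*) [AddCommGroup V] [Module ℂ V]
    [StarAddMonoid V] [StarModule ℂ V] where
  pos : ConeFam V
  unit : V
  unit_sa : star unit = unit
  pos_sa : ∀ {n : ℕ} {M : Matrix (Fin n) (Fin n) V}, M ∈ pos n → M.conjTranspose = M
  pos_add : ∀ {n : ℕ} {M N : Matrix (Fin n) (Fin n) V}, M ∈ pos n → N ∈ pos n → M + N ∈ pos n
  pos_smul : ∀ {n : ℕ} (r : ℝ) {M : Matrix (Fin n) (Fin n) V},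
      0 ≤ r → M ∈ pos n → (r : ℂ) • M ∈ pos n
  pos_strict : ∀ {n : ℕ} {M : Matrix (Fin n) (Fin n) V}, M ∈ pos n → -M ∈ pos n → M = 0
  pos_congr : ∀ {m n : ℕ} (A : Matrix (Fin m) (Fin n) ℂ) {M : Matrix (Fin m) (Fin m) V},
      M ∈ pos m → matCongr A M ∈ pos n
  unit_pos : ∀ n, unitMat unit n ∈ pos n
  orderUnit : ∀ {n : ℕ} (M : Matrix (Fin n) (Fin n) V), M.conjTranspose = M →
      ∃ r : ℝ, 0 < r ∧ (r : ℂ) • unitMat unit n + M ∈ pos n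
  archimedean : ∀ {n : ℕ} (M : Matrix (Fin n) (Fin n) V),
      (∀ ε : ℝ, 0 < ε → (ε : ℂ) • unitMat unit n + M ∈ pos n) → M ∈ pos n

section Maps
variable {V W : Type*} [AddCommGroup V] [Module ℂ V] [AddCommGroup W] [Module ℂ W]

/-- `k`-positivity of a linear map with respect to given matrix cone families. -/
def osKPos (C : ConeFam V) (D : ConeFam W) (k : ℕ) (φ : V →ₗ[ℂ] W) : Prop :=
  ∀ M ∈ C k, mmap φ M ∈ D k

/-- Complete positivity. -/
def osCP (C : ConeFam V) (D : ConeFam W) (φ : V →ₗ[ℂ] W) : Prop :=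
  ∀ k, osKPos C D k φ

/-- Unital complete positivity. -/
def osUCP (C : ConeFam V) (e : V) (D : ConeFam W) (f : W) (φ : V →ₗ[ℂ] W) : Prop :=
  osCP C D φ ∧ φ e = f

/-- Complete order embedding. -/
def osCOEmbedding (C : ConeFam V) (D : ConeFam W) (φ : V →ₗ[ℂ] W) : Prop :=
  Function.Injective φ ∧ osCP C D φ ∧
    ∀ (n : ℕ) (M : Matrix (Fin n) (Fin n) V), mmap φ M ∈ D n → M ∈ C n

/-- Operator system quotient map: a surjective completely positive map such that the
induced map on the quotient by its kernel is a complete order isomorphism, expressed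
via the standard `ε`-lifting characterisation of positive matrices. -/
def osQuotientMap (C : ConeFam V) (D : ConeFam W) (f : W) (φ : V →ₗ[ℂ] W) : Prop :=
  Function.Surjective φ ∧ osCP C D φ ∧
    ∀ (n : ℕ), ∀ N ∈ D n, ∀ ε : ℝ, 0 < ε →
      ∃ M ∈ C n, mmap φ M = N + (ε : ℂ) • unitMat f n

/-- Positivity of a single element (as a `1 × 1` matrix). -/
def posElem (C : ConeFam V) (v : V) : Prop :=
  (Matrix.of (fun _ _ => v) : Matrix (Fin 1) (Fin 1) V) ∈ C 1

/-- A state: a unital positive linear functional. -/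
def osState (C : ConeFam V) (e : V) (f : Module.Dual ℂ V) : Prop :=
  f e = 1 ∧ ∀ v, posElem C v → 0 ≤ f v

/-- A faithful state. -/
def osFaithfulState (C : ConeFam V) (e : V) (f : Module.Dual ℂ V) : Prop :=
  osState C e f ∧ ∀ v, posElem C v → f v = 0 → v = 0

end Maps

section Dual
variable {V : Type*} [AddCommGroup V] [Module ℂ V]

/-- Flatten a matrix of scalar matrices to a scalar matrix over the product index. -/
def blockify {n : ℕ} {ι : Type*} (M : Matrix (Fin n) (Fin n) (Matrix ι ι ℂ)) :
    Matrix (Fin n × ι) (Fin n × ι) ℂ :=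
  Matrix.of fun p q => M p.1 q.1 p.2 q.2

/-- The matrix-valued map associated with a matrix of functionals. -/
def matValued {n : ℕ} (F : Matrix (Fin n) (Fin n) (Module.Dual ℂ V)) :
    V →ₗ[ℂ] Matrix (Fin n) (Fin n) ℂ where
  toFun v := Matrix.of fun i j => F i j v
  map_add' a b := by ext i j; simp
  map_smul' c a := by ext i j; simp

/-- Complete positivity of a map into a matrix algebra `Mₖ(ℂ)`. -/
def CPIntoMat (C : ConeFam V) {k : ℕ} (φ : V →ₗ[ℂ] Matrix (Fin k) (Fin k) ℂ) : Prop :=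
  ∀ (n : ℕ), ∀ M ∈ C n, (blockify (mmap φ M)).PosSemidef

/-- The dual matrix ordering on `Sᵈ`: a matrix of functionals is positive iff the
associated matrix-valued map is completely positive. -/
def osDualCone (C : ConeFam V) : ConeFam (Module.Dual ℂ V) :=
  fun _ => { F | CPIntoMat C (matValued F) }

/-- The induced (subsystem) matrix ordering on a subspace. -/
def osSubCone (C : ConeFam V) (S₀ : Submodule ℂ V) : ConeFam S₀ :=
  fun n => { M | mmap S₀.subtype M ∈ C n }

end Dual

/-- A null subspace: a `*`-closed subspace containing no nonzero positive element. -/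
def IsNullSubspace {V : Type*} [AddCommGroup V] [Module ℂ V] [StarAddMonoid V]
    (C : ConeFam V) (J : Submodule ℂ V) : Prop :=
  (∀ v ∈ J, star v ∈ J) ∧ ∀ v ∈ J, posElem C v → v = 0

/-- The canonical involution on the dual space: `f⋆ (s) = conj (f (s⋆))`. -/
def dstar {V : Type*} [AddCommGroup V] [Module ℂ V] [StarAddMonoid V] [StarModule ℂ V]
    (f : Module.Dual ℂ V) : Module.Dual ℂ V where
  toFun v := starRingEnd ℂ (f (star v))
  map_add' a b := by simp
  map_smul' c a := by
    simp only [star_smul, LinearMap.map_smul, smul_eq_mul, map_mul, RingHom.id_apply,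
      starRingEnd_apply, star_star]

section TensorDefs
variable {V W : Type*} [AddCommGroup V] [Module ℂ V] [AddCommGroup W] [Module ℂ W]

/-- Kronecker product of scalar matrices. -/
def osKron {k m : ℕ} (X : Matrix (Fin k) (Fin k) ℂ) (Y : Matrix (Fin m) (Fin m) ℂ) :
    Matrix (Fin k × Fin m) (Fin k × Fin m) ℂ :=
  Matrix.of fun p q => X p.1 q.1 * Y p.2 q.2

/-- The map `φ ⊗ ψ : V ⊗ W → M_k ⊗ M_m = M_{km}`. -/
def osFuse {k m : ℕ} (φ : V →ₗ[ℂ] Matrix (Fin k) (Fin k) ℂ)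
    (ψ : W →ₗ[ℂ] Matrix (Fin m) (Fin m) ℂ) :
    V ⊗[ℂ] W →ₗ[ℂ] Matrix (Fin k × Fin m) (Fin k × Fin m) ℂ :=
  TensorProduct.lift (LinearMap.mk₂ ℂ (fun v w => osKron (φ v) (ψ w))
    (fun v v' w => by ext p q; simp [osKron, add_mul])
    (fun c v w => by ext p q; simp [osKron, smul_eq_mul]; ring)
    (fun v w w' => by ext p q; simp [osKron, mul_add])
    (fun c v w => by ext p q; simp [osKron, smul_eq_mul]; ring))

/-- The minimal operator system tensor cone. -/
def osMin (C : ConeFam V) (e : V) (D : ConeFam W) (f : W) : ConeFam (V ⊗[ℂ] W) :=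
  fun n => { U | ∀ (k m : ℕ) (φ : V →ₗ[ℂ] Matrix (Fin k) (Fin k) ℂ)
      (ψ : W →ₗ[ℂ] Matrix (Fin m) (Fin m) ℂ),
      CPIntoMat C φ → φ e = 1 → CPIntoMat D ψ → ψ f = 1 →
      (blockify (mmap (osFuse φ ψ) U)).PosSemidef }

/-- The elementary tensor `P ⊗ Q` of a `V`-valued and a `W`-valued matrix. -/
def tensorElemMat {k m : ℕ} (P : Matrix (Fin k) (Fin k) V) (Q : Matrix (Fin m) (Fin m) W) :
    Matrix (Fin (k * m)) (Fin (k * m)) (V ⊗[ℂ] W) :=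
  Matrix.of fun i j =>
    P (finProdFinEquiv.symm i).1 (finProdFinEquiv.symm j).1 ⊗ₜ[ℂ]
      Q (finProdFinEquiv.symm i).2 (finProdFinEquiv.symm j).2

/-- The cones `Dₙ^max` of the maximal tensor product. -/
def osMaxD (C : ConeFam V) (D : ConeFam W) : ConeFam (V ⊗[ℂ] W) :=
  fun n => { U | ∃ (k m : ℕ) (P : Matrix (Fin k) (Fin k) V) (Q : Matrix (Fin m) (Fin m) W)
      (A : Matrix (Fin (k * m)) (Fin n) ℂ),
      P ∈ C k ∧ Q ∈ D m ∧ U = matCongr A (tensorElemMat P Q) }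

/-- The maximal operator system tensor cone (Archimedeanization of `Dₙ^max`). -/
def osMax (C : ConeFam V) (e : V) (D : ConeFam W) (f : W) : ConeFam (V ⊗[ℂ] W) :=
  fun n => { U | ∀ ε : ℝ, 0 < ε → (ε : ℂ) • unitMat (e ⊗ₜ[ℂ] f) n + U ∈ osMaxD C D n }

end TensorDefs

/-- The canonical matrix ordering of a C*-algebra: `M ≥ 0` iff `M = N⋆ N`. -/
def cstarPos (A : Type*) [Ring A] [StarRing A] [Algebra ℂ A] : ConeFam A :=
  fun n => { M | ∃ N : Matrix (Fin n) (Fin n) A, M = N.conjTranspose * N }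

/-- The (local) lifting property of a finite dimensional operator system: every ucp map
into a quotient C*-algebra `A/I` (presented by a surjective unital `*`-homomorphism)
admits a completely positive lift. -/
def osLiftingProperty {V : Type*} [AddCommGroup V] [Module ℂ V] (C : ConeFam V) (e : V) :
    Prop :=
  ∀ (A B : Type) [CStarAlgebra A] [CStarAlgebra B] (q : A →⋆ₐ[ℂ] B),
    Function.Surjective (⇑q) →
    ∀ φ : V →ₗ[ℂ] B, osUCP C e (cstarPos B) 1 φ →
      ∃ ψ : V →ₗ[ℂ] A, osCP C (cstarPos A) ψ ∧ q.toAlgHom.toLinearMap ∘ₗ ψ = φ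

/-- Exactness of a (finite dimensional) operator system: for every quotient of C*-algebras
the natural map `(S ⊗_min A)/(S ⊗ I) → S ⊗_min (A/I)` is a complete order isomorphism. -/
def osExact {V : Type*} [AddCommGroup V] [Module ℂ V] (C : ConeFam V) (e : V) : Prop :=
  ∀ (A B : Type) [CStarAlgebra A] [CStarAlgebra B] (q : A →⋆ₐ[ℂ] B),
    Function.Surjective (⇑q) →
    ∀ (n : ℕ) (U : Matrix (Fin n) (Fin n) (V ⊗[ℂ] B)),
      U ∈ osMin C e (cstarPos B) (1 : B) n ↔
        ∀ ε : ℝ, 0 < ε → ∃ P ∈ osMin C e (cstarPos A) (1 : A) n,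
          mmap (LinearMap.lTensor V q.toAlgHom.toLinearMap) P
            = U + (ε : ℂ) • unitMat (e ⊗ₜ[ℂ] (1 : B)) n

/-- Kirchberg's local lifting property (LLP) of a unital C*-algebra. -/
def cstarLLP (U : Type*) [CStarAlgebra U] : Prop :=
  ∀ (A B : Type) [CStarAlgebra A] [CStarAlgebra B] (q : A →⋆ₐ[ℂ] B),
    Function.Surjective (⇑q) →
    ∀ (θ : U →ₗ[ℂ] B), osUCP (cstarPos U) 1 (cstarPos B) 1 θ →
    ∀ (F : Submodule ℂ U), FiniteDimensional ℂ F → (∀ x ∈ F, star x ∈ F) →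
    ∀ (h1 : (1 : U) ∈ F),
      ∃ ψ : (F : Type _) →ₗ[ℂ] A,
        osUCP (osSubCone (cstarPos U) F) ⟨1, h1⟩ (cstarPos A) 1 ψ ∧
        q.toAlgHom.toLinearMap ∘ₗ ψ = θ ∘ₗ F.subtype

end
section AuxOS9

open Complex

lemma aux_quad {ι : Type*} [Fintype ι] (A : Matrix ι ι ℂ) (v : ι → ℂ) :
    dotProduct (star v) (A.mulVec v)
      = ∑ p, ∑ q, (starRingEnd ℂ) (v p) * A p q * v q := by
  simp [dotProduct, Matrix.mulVec, Finset.mul_sum, mul_assoc]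

lemma aux_quad_two {ι : Type*} [Fintype ι] [DecidableEq ι] (A : Matrix ι ι ℂ)
    (i j : ι) (c d : ℂ) :
    dotProduct (star (Pi.single i c + Pi.single j d))
        (A.mulVec (Pi.single i c + Pi.single j d))
      = (starRingEnd ℂ) c * A i i * c + (starRingEnd ℂ) c * A i j * d
        + (starRingEnd ℂ) d * A j i * c + (starRingEnd ℂ) d * A j j * d := by
  rw [star_add, ← Pi.single_star, ← Pi.single_star]
  simp only [Matrix.mulVec_add, Matrix.mulVec_single, dotProduct_add,
    add_dotProduct, single_dotProduct]
  simp [Complex.star_def, mul_comm, mul_assoc, mul_left_comm]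
  ring

lemma aux_posSemidef_of_quad {ι : Type*} [Fintype ι] [DecidableEq ι] (A : Matrix ι ι ℂ)
    (h : ∀ v, 0 ≤ dotProduct (star v) (A.mulVec v)) : A.PosSemidef := by
  refine Matrix.PosSemidef.of_dotProduct_mulVec_nonneg ?_ h
  have hsc : ∀ v, (starRingEnd ℂ) (dotProduct (star v) (A.mulVec v))
      = dotProduct (star v) (A.mulVec v) := by
    intro v
    have := (Complex.nonneg_iff.mp (h v)).2
    rw [Complex.conj_eq_iff_im]; exact this.symm
  have hdiag : ∀ i, (starRingEnd ℂ) (A i i) = A i i := by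
    intro i
    have h2 := hsc (Pi.single i 1 + Pi.single i 0)
    rw [aux_quad_two] at h2
    simpa using h2
  have key : ∀ i j, (starRingEnd ℂ) (A j i) = A i j := by
    intro i j
    have e1 := hsc (Pi.single i 1 + Pi.single j 1)
    rw [aux_quad_two] at e1
    simp only [map_one, one_mul, mul_one, map_add, map_mul, hdiag] at e1
    have e2 := hsc (Pi.single i 1 + Pi.single j Complex.I)
    rw [aux_quad_two] at e2
    simp only [map_one, one_mul, mul_one, map_add, map_mul, hdiag, Complex.conj_I,
      map_neg, neg_neg] at e2
    linear_combination e1/2 - Complex.I/2 * e2 + (((starRingEnd ℂ) (A j i)) - A i j + A j i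
      - ((starRingEnd ℂ) (A i j)))/2 * Complex.I_sq
  exact Matrix.ext fun i j => key i j

set_option maxHeartbeats 1000000 in
lemma aux_quad_matValued {V : Type*} [AddCommGroup V] [Module ℂ V] {n k : ℕ}
    (F : Matrix (Fin k) (Fin k) (Module.Dual ℂ V)) (M : Matrix (Fin n) (Fin n) V)
    (v : Fin n × Fin k → ℂ) :
    dotProduct (star v) ((blockify (mmap (matValued F) M)).mulVec v)
      = ∑ a, ∑ b, F a b ((matCongr (Matrix.of fun i a => v (i, a)) M) a b) := by
  rw [aux_quad]
  have hL : ∀ (p q : Fin n × Fin k),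
      (blockify (mmap (matValued F) M)) p q = F p.2 q.2 (M p.1 q.1) := fun p q => rfl
  simp only [hL]
  have hR : ∀ a b, F a b ((matCongr (Matrix.of fun i a => v (i, a)) M) a b)
      = ∑ i, ∑ j, ((starRingEnd ℂ) (v (i, a)) * v (j, b)) * F a b (M i j) := by
    intro a b
    simp only [matCongr, Matrix.of_apply, map_sum, map_smul, smul_eq_mul, Complex.star_def]
  simp only [hR]
  rw [show (∑ p : Fin n × Fin k, ∑ q : Fin n × Fin k,
        (starRingEnd ℂ) (v p) * F p.2 q.2 (M p.1 q.1) * v q)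
      = ∑ z : (Fin n × Fin k) × (Fin n × Fin k),
        (starRingEnd ℂ) (v z.1) * F z.1.2 z.2.2 (M z.1.1 z.2.1) * v z.2 from
    (Fintype.sum_prod_type (f := fun z : (Fin n × Fin k) × (Fin n × Fin k) =>
      (starRingEnd ℂ) (v z.1) * F z.1.2 z.2.2 (M z.1.1 z.2.1) * v z.2)).symm]
  rw [show (∑ a, ∑ b, ∑ i, ∑ j,
        ((starRingEnd ℂ) (v (i, a)) * v (j, b)) * F a b (M i j) : ℂ)
      = ∑ z : (Fin k × Fin k) × (Fin n × Fin n),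
        ((starRingEnd ℂ) (v (z.2.1, z.1.1)) * v (z.2.2, z.1.2)) * F z.1.1 z.1.2 (M z.2.1 z.2.2)
      from by simp [Fintype.sum_prod_type]]
  refine Fintype.sum_equiv ⟨fun z => ((z.1.2, z.2.2), (z.1.1, z.2.1)),
    fun z => ((z.2.1, z.1.1), (z.2.2, z.1.2)), by rintro ⟨⟨a, b⟩, ⟨c, d⟩⟩; rfl,
    by rintro ⟨⟨a, b⟩, ⟨c, d⟩⟩; rfl⟩ _ _ ?_
  rintro ⟨⟨i, a⟩, ⟨j, b⟩⟩
  dsimp only [Equiv.coe_fn_mk]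
  ring

lemma aux_quad_diag {V : Type*} [AddCommGroup V] [Module ℂ V] {k : ℕ}
    (F : Matrix (Fin k) (Fin k) (Module.Dual ℂ V)) (P : Matrix (Fin k) (Fin k) V) :
    dotProduct (star (fun p : Fin k × Fin k => if p.1 = p.2 then (1 : ℂ) else 0))
        ((blockify (mmap (matValued F) P)).mulVec
          (fun p : Fin k × Fin k => if p.1 = p.2 then (1 : ℂ) else 0))
      = ∑ a, ∑ b, F a b (P a b) := by
  rw [aux_quad]
  have hL : ∀ (p q : Fin k × Fin k),
      (blockify (mmap (matValued F) P)) p q = F p.2 q.2 (P p.1 q.1) := fun p q => rfl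
  simp only [hL, Fintype.sum_prod_type]
  simp [apply_ite (starRingEnd ℂ), ite_mul, mul_ite, Finset.sum_ite_eq, Finset.sum_ite_eq']

variable {W : Type*} [AddCommGroup W] [Module ℂ W] [StarAddMonoid W] [StarModule ℂ W]

lemma aux_zero_mem (T : OSStruct W) (n : ℕ) : (0 : Matrix (Fin n) (Fin n) W) ∈ T.pos n := by
  have h := T.pos_congr (0 : Matrix (Fin n) (Fin n) ℂ) (T.unit_pos n)
  have he : matCongr (0 : Matrix (Fin n) (Fin n) ℂ) (unitMat T.unit n) = 0 := by
    ext i j; simp [matCongr]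
  rwa [he] at h

set_option maxHeartbeats 1000000 in
lemma aux_sep (T : OSStruct W) {n : ℕ} (X : Matrix (Fin n) (Fin n) W)
    (hXh : X.conjTranspose = X) (hX : X ∉ T.pos n) :
    ∃ L : Matrix (Fin n) (Fin n) W →ₗ[ℂ] ℂ,
      (∀ Y ∈ T.pos n, 0 ≤ L Y) ∧
      (∀ Y, L Y.conjTranspose = (starRingEnd ℂ) (L Y)) ∧ (L X).re < 0 := by
  classical
  set U : Matrix (Fin n) (Fin n) W := unitMat T.unit n with hUdef
  have hUpos : U ∈ T.pos n := T.unit_pos n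
  have hXne : X ≠ 0 := fun h => hX (h ▸ aux_zero_mem T n)
  -- negative multiples of the unit are not positive
  have hU0 : ∀ s : ℝ, s < 0 → (s : ℂ) • U ∈ T.pos n → False := by
    intro s hs hmem
    have hs0 : s ≠ 0 := ne_of_lt hs
    have h1 := T.pos_smul (-s)⁻¹ (inv_nonneg.mpr (by linarith)) hmem
    rw [smul_smul] at h1
    have h2r : ((-s)⁻¹ * s : ℝ) = -1 := by
      rw [inv_mul_eq_div, div_neg, div_self hs0]
    have h2 : ((((-s)⁻¹ : ℝ) : ℂ) * (s : ℂ)) = ((-1 : ℝ) : ℂ) := by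
      rw [← Complex.ofReal_mul, h2r]
    rw [h2] at h1
    have hUz : U = 0 := T.pos_strict hUpos (by
      have : ((-1 : ℝ) : ℂ) • U = -U := by push_cast; simp
      rwa [this] at h1)
    obtain ⟨r, hr, hmem'⟩ := T.orderUnit X hXh
    rw [← hUdef, hUz] at hmem'
    simp only [smul_zero, zero_add] at hmem'
    exact hX hmem'
  -- hermitian part
  set rehm : Matrix (Fin n) (Fin n) W → Matrix (Fin n) (Fin n) W :=
    fun Y => (2⁻¹ : ℂ) • (Y + Y.conjTranspose) with hrehm
  have rehm_herm : ∀ Y, (rehm Y).conjTranspose = rehm Y := by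
    intro Y
    simp only [hrehm, Matrix.conjTranspose_smul, Matrix.conjTranspose_add,
      Matrix.conjTranspose_conjTranspose]
    rw [add_comm]
    congr 1
    simp [Complex.star_def, map_inv₀]
  have rehm_add : ∀ Y Z, rehm (Y + Z) = rehm Y + rehm Z := by
    intro Y Z
    simp only [hrehm, Matrix.conjTranspose_add, smul_add]
    module
  have rehm_neg : ∀ Y, rehm (-Y) = -(rehm Y) := by
    intro Y
    simp only [hrehm, Matrix.conjTranspose_neg, smul_neg, ← neg_add]
  have rehm_real : ∀ (c : ℝ) (Y), rehm ((c : ℂ) • Y) = (c : ℂ) • rehm Y := by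
    intro c Y
    simp only [hrehm, Matrix.conjTranspose_smul, Complex.star_def, Complex.conj_ofReal,
      ← smul_add, smul_smul, mul_comm]
  have rehm_self : ∀ Y, Y.conjTranspose = Y → rehm Y = Y := by
    intro Y hY
    rw [hrehm]
    simp only [hY, ← two_smul ℂ Y, smul_smul]
    norm_num
  -- the sets defining the sublinear functional
  set Sset : Matrix (Fin n) (Fin n) W → Set ℝ :=
    fun Y => {r : ℝ | (r : ℂ) • U - rehm Y ∈ T.pos n} with hSset
  have Sup : ∀ Y r r', r ∈ Sset Y → r ≤ r' → r' ∈ Sset Y := by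
    intro Y r r' hr hle
    have h1 := T.pos_add (T.pos_smul (r' - r) (by linarith) hUpos) hr
    have h2 : ((r' - r : ℝ) : ℂ) • U + ((r : ℂ) • U - rehm Y)
        = (r' : ℂ) • U - rehm Y := by
      push_cast
      module
    rwa [h2] at h1
  have Sne : ∀ Y, (Sset Y).Nonempty := by
    intro Y
    obtain ⟨r, hr, hmem⟩ := T.orderUnit (-(rehm Y)) (by rw [Matrix.conjTranspose_neg, rehm_herm])
    refine ⟨r, ?_⟩
    simp only [hSset, Set.mem_setOf_eq, sub_eq_add_neg]
    exact hmem
  have Sbdd : ∀ Y, BddBelow (Sset Y) := by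
    intro Y
    obtain ⟨s, hs⟩ := Sne (-Y)
    refine ⟨-s, fun r hr => ?_⟩
    by_contra hlt
    push_neg at hlt
    have hs' : (s : ℂ) • U + rehm Y ∈ T.pos n := by
      have := hs
      simp only [hSset, Set.mem_setOf_eq, rehm_neg, sub_neg_eq_add] at this
      exact this
    have hsum := T.pos_add hr hs'
    have he : ((r : ℂ) • U - rehm Y) + ((s : ℂ) • U + rehm Y)
        = ((r + s : ℝ) : ℂ) • U := by push_cast; module
    rw [he] at hsum
    exact hU0 (r + s) (by linarith) hsum
  set p : Matrix (Fin n) (Fin n) W → ℝ := fun Y => sInf (Sset Y) with hp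
  have p_le : ∀ Y r, r ∈ Sset Y → p Y ≤ r := fun Y r hr => csInf_le (Sbdd Y) hr
  have pmem : ∀ Y, ((p Y : ℝ) : ℂ) • U - rehm Y ∈ T.pos n := by
    intro Y
    apply T.archimedean
    intro ε hε
    obtain ⟨r, hr, hrlt⟩ := Real.lt_sInf_add_pos (Sne Y) hε
    have hmem := Sup Y r (p Y + ε) hr (le_of_lt hrlt)
    have he : ((p Y + ε : ℝ) : ℂ) • U - rehm Y
        = (ε : ℂ) • U + (((p Y : ℝ) : ℂ) • U - rehm Y) := by push_cast; module
    rw [hSset, Set.mem_setOf_eq, he] at hmem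
    exact hmem
  have p_add : ∀ Y Z, p (Y + Z) ≤ p Y + p Z := by
    intro Y Z
    apply p_le
    have h1 := T.pos_add (pmem Y) (pmem Z)
    have he : (((p Y : ℝ) : ℂ) • U - rehm Y) + (((p Z : ℝ) : ℂ) • U - rehm Z)
        = ((p Y + p Z : ℝ) : ℂ) • U - (rehm Y + rehm Z) := by push_cast; module
    rw [he, ← rehm_add] at h1
    exact h1
  have p_zero : p 0 = 0 := by
    have h0 : rehm 0 = 0 := by simp [hrehm]
    have h1 : p 0 ≤ 0 := p_le 0 0 (by simp [hSset, h0, aux_zero_mem T n])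
    have h2 : 0 ≤ p 0 := by
      apply le_csInf (Sne 0)
      intro r hr
      by_contra hlt
      push_neg at hlt
      simp only [hSset, Set.mem_setOf_eq, h0, sub_zero] at hr
      exact hU0 r hlt hr
    linarith
  have rehm_zero : rehm (0 : Matrix (Fin n) (Fin n) W) = 0 := by simp [hrehm]
  have p_reonly : ∀ Y, rehm Y = 0 → p Y = 0 := by
    intro Y hY
    have hss : Sset Y = Sset 0 := by simp [hSset, hY, rehm_zero]
    calc p Y = sInf (Sset Y) := rfl
      _ = sInf (Sset 0) := by rw [hss]
      _ = 0 := p_zero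
  have p_smul : ∀ (c : ℝ), 0 < c → ∀ Y, p ((c : ℂ) • Y) = c * p Y := by
    have hle : ∀ (d : ℝ), 0 < d → ∀ (Z : Matrix (Fin n) (Fin n) W),
        p ((d : ℂ) • Z) ≤ d * p Z := by
      intro d hd Z
      apply p_le
      have h1 := T.pos_smul d hd.le (pmem Z)
      have he : (d : ℂ) • (((p Z : ℝ) : ℂ) • U - rehm Z)
          = ((d * p Z : ℝ) : ℂ) • U - rehm ((d : ℂ) • Z) := by
        rw [rehm_real]; push_cast; module
      rw [he] at h1
      exact h1
    intro c hc Y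
    have h1 := hle c hc Y
    have h2 := hle c⁻¹ (by positivity) ((c : ℂ) • Y)
    rw [smul_smul] at h2
    have he : ((c⁻¹ : ℝ) : ℂ) * (c : ℂ) = 1 := by
      push_cast; field_simp
    rw [he, one_smul] at h2
    have h4 := mul_le_mul_of_nonneg_left h2 hc.le
    have h3 : c * (c⁻¹ * p ((c : ℂ) • Y)) = p ((c : ℂ) • Y) := by
      field_simp
    linarith
  -- p (-X) is positive
  have rehm_X : rehm X = X := rehm_self X hXh
  have hpX : 0 < p (-X) := by
    by_contra hle
    push_neg at hle
    apply hX
    apply T.archimedean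
    intro ε hε
    have h1 := pmem (-X)
    rw [rehm_neg, rehm_X, sub_neg_eq_add] at h1
    have h2 := T.pos_smul (ε - p (-X)) (by linarith) hUpos
    have hsum := T.pos_add h2 h1
    have he : ((ε - p (-X) : ℝ) : ℂ) • U + ((((p (-X) : ℝ)) : ℂ) • U + X)
        = (ε : ℂ) • U + X := by push_cast; module
    rwa [he] at hsum
  -- Hahn-Banach extension
  have key0 : 0 ≤ p X + p (-X) := by
    have := p_add X (-X)
    simp only [add_neg_cancel, p_zero] at this
    linarith
  have hfle : ∀ x : (LinearPMap.mkSpanSingleton (K := ℝ) (σ := RingHom.id ℝ) X (-(p (-X))) hXne).domain,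
      (LinearPMap.mkSpanSingleton (K := ℝ) (σ := RingHom.id ℝ) X (-(p (-X))) hXne) x ≤ p ↑x := by
    rintro ⟨x, hx⟩
    rcases Submodule.mem_span_singleton.mp hx with ⟨t, rfl⟩
    rw [LinearPMap.mkSpanSingleton'_apply]
    show t • (-(p (-X))) ≤ p (t • X)
    rcases lt_trichotomy t 0 with ht | ht | ht
    · have he : t • X = ((-t : ℝ) : ℂ) • (-X) := by
        rw [Complex.coe_smul, smul_neg, neg_smul, neg_neg]
      rw [he, p_smul (-t) (by linarith)]
      simp only [smul_eq_mul]
      nlinarith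
    · subst ht
      simp [p_zero]
    · have he : t • X = ((t : ℝ) : ℂ) • X := by rw [Complex.coe_smul]
      rw [he, p_smul t ht]
      simp only [smul_eq_mul]
      nlinarith
  obtain ⟨L₀, hL₀ext, hL₀le⟩ := exists_extension_of_le_sublinear
    (LinearPMap.mkSpanSingleton X (-(p (-X))) hXne) p
    (fun c hc x => by rw [← Complex.coe_smul]; exact p_smul c hc x)
    p_add
    hfle
  -- properties of L₀
  have hL₀X : L₀ X = -(p (-X)) := by
    have := hL₀ext ⟨X, Submodule.mem_span_singleton_self X⟩
    rwa [LinearPMap.mkSpanSingleton_apply] at this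
  have hL₀pos : ∀ Y ∈ T.pos n, 0 ≤ L₀ Y := by
    intro Y hY
    have h1 : p (-Y) ≤ 0 := by
      apply p_le
      simp only [hSset, Set.mem_setOf_eq, rehm_neg, rehm_self Y (T.pos_sa hY),
        Complex.ofReal_zero, zero_smul, sub_neg_eq_add, zero_add]
      exact hY
    have h2 := hL₀le (-Y)
    rw [map_neg] at h2
    linarith
  have hL₀null : ∀ Y, rehm Y = 0 → L₀ Y = 0 := by
    intro Y hY
    have h1 := hL₀le Y
    have h2 := hL₀le (-Y)
    rw [map_neg] at h2
    rw [p_reonly Y hY] at h1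
    rw [p_reonly (-Y) (by rw [rehm_neg, hY, neg_zero])] at h2
    linarith
  have hL₀conj : ∀ Y, L₀ Y.conjTranspose = L₀ Y := by
    intro Y
    have h0 : rehm (Y.conjTranspose - Y) = 0 := by
      simp only [hrehm]
      rw [Matrix.conjTranspose_sub, Matrix.conjTranspose_conjTranspose]
      rw [show Y.conjTranspose - Y + (Y - Y.conjTranspose) = 0 by abel, smul_zero]
    have := hL₀null _ h0
    rw [map_sub] at this
    linarith
  have hL₀Iconj : ∀ Y : Matrix (Fin n) (Fin n) W,
      L₀ ((RCLike.I : ℂ) • Y.conjTranspose) = -(L₀ ((RCLike.I : ℂ) • Y)) := by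
    intro Y
    rw [RCLike.I_to_complex]
    have h0 : rehm (Complex.I • Y.conjTranspose + Complex.I • Y) = 0 := by
      simp only [hrehm, Matrix.conjTranspose_add, Matrix.conjTranspose_smul,
        Matrix.conjTranspose_conjTranspose, Complex.star_def, Complex.conj_I]
      rw [show Complex.I • Y.conjTranspose + Complex.I • Y +
        (-Complex.I • Y + -Complex.I • Y.conjTranspose) = 0 by module, smul_zero]
    have := hL₀null _ h0
    rw [map_add] at this
    linarith
  -- the complex-linear functional
  refine ⟨L₀.extendTo𝕜', ?_, ?_, ?_⟩
  · intro Y hY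
    have hIY : rehm ((RCLike.I : ℂ) • Y) = 0 := by
      rw [show ((RCLike.I : ℂ)) = Complex.I from RCLike.I_to_complex]
      simp only [hrehm, Matrix.conjTranspose_smul, Complex.star_def, Complex.conj_I,
        T.pos_sa hY]
      rw [show Complex.I • Y + -Complex.I • Y = 0 by module, smul_zero]
    have h0 : L₀ ((RCLike.I : ℂ) • Y) = 0 := hL₀null _ hIY
    rw [LinearMap.extendTo𝕜', LinearMap.extendTo𝕜'_apply, h0]
    simpa using Complex.zero_le_real.mpr (hL₀pos Y hY)
  · intro Y
    rw [LinearMap.extendTo𝕜', LinearMap.extendTo𝕜'_apply, LinearMap.extendTo𝕜'_apply, hL₀conj, hL₀Iconj]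
    rw [map_sub, map_mul, RCLike.conj_I, RCLike.conj_ofReal, RCLike.conj_ofReal]
    push_cast
    ring
  · have hXre : (L₀.extendTo𝕜' X : ℂ).re = L₀ X := by
      rw [← RCLike.re_to_complex]
      exact LinearMap.extendTo𝕜'_apply_re L₀ X
    rw [hXre, hL₀X]
    linarith

/-- Embedding of `W` as `1 × 1` matrices. -/
def auxToM {W : Type*} [AddCommGroup W] [Module ℂ W] : W →ₗ[ℂ] Matrix (Fin 1) (Fin 1) W where
  toFun w := Matrix.of fun _ _ => w
  map_add' a b := rfl
  map_smul' c a := rfl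

/-- The `(a,b)` matrix-unit insertion as a linear map. -/
def auxStd {W : Type*} [AddCommGroup W] [Module ℂ W] {k : ℕ} (a b : Fin k) :
    W →ₗ[ℂ] Matrix (Fin k) (Fin k) W where
  toFun w := Matrix.of fun c d => if c = a ∧ d = b then w else 0
  map_add' x y := by
    ext c d
    by_cases h : c = a ∧ d = b <;> simp [h]
  map_smul' r x := by
    ext c d
    by_cases h : c = a ∧ d = b <;> simp [h]

lemma aux_std_sum {W : Type*} [AddCommGroup W] [Module ℂ W] {k : ℕ}
    (P : Matrix (Fin k) (Fin k) W) : (∑ a, ∑ b, auxStd a b (P a b)) = P := by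
  ext c d
  rw [Matrix.sum_apply]
  simp only [Matrix.sum_apply]
  simp [auxStd, ite_and, Finset.sum_ite_eq, Finset.sum_ite_eq']

lemma aux_sep1 {W : Type*} [AddCommGroup W] [Module ℂ W] [StarAddMonoid W] [StarModule ℂ W]
    (T : OSStruct W) (u : W) (hu : star u = u) (hnp : ¬ posElem T.pos u) :
    ∃ f : W →ₗ[ℂ] ℂ, (∀ v, posElem T.pos v → 0 ≤ f v) ∧
      (∀ x, f (star x) = (starRingEnd ℂ) (f x)) ∧ (f u).re < 0 := by
  have hXh : (Matrix.of fun _ _ => u : Matrix (Fin 1) (Fin 1) W).conjTranspose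
      = Matrix.of fun _ _ => u := by
    ext i j
    simp [Matrix.conjTranspose_apply, hu]
  obtain ⟨L, hpos, hconj, hre⟩ := aux_sep T (Matrix.of fun _ _ => u) hXh hnp
  refine ⟨L ∘ₗ auxToM, ?_, ?_, ?_⟩
  · intro v hv
    exact hpos _ hv
  · intro x
    have he : auxToM (W := W) (star x) = (auxToM x).conjTranspose := by
      ext i j
      simp [auxToM, Matrix.conjTranspose_apply]; rfl
    rw [LinearMap.comp_apply, he, hconj]
    rfl
  · exact hre

lemma aux_vanish {W : Type*} [AddCommGroup W] [Module ℂ W] [StarAddMonoid W] [StarModule ℂ W]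
    (T : OSStruct W) (w : W)
    (hw : ∀ f : W →ₗ[ℂ] ℂ, (∀ v, posElem T.pos v → 0 ≤ f v) →
      (∀ x, f (star x) = (starRingEnd ℂ) (f x)) → f w = 0) : w = 0 := by
  have key : ∀ h : W, star h = h →
      (∀ f : W →ₗ[ℂ] ℂ, (∀ v, posElem T.pos v → 0 ≤ f v) →
        (∀ x, f (star x) = (starRingEnd ℂ) (f x)) → f h = 0) → h = 0 := by
    intro h hh hfh
    have hp : posElem T.pos h := by
      by_contra hc
      obtain ⟨f, h1, h2, h3⟩ := aux_sep1 T h hh hc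
      rw [hfh f h1 h2] at h3
      simp at h3
    have hn : posElem T.pos (-h) := by
      by_contra hc
      have hh' : star (-h) = -h := by rw [star_neg, hh]
      obtain ⟨f, h1, h2, h3⟩ := aux_sep1 T (-h) hh' hc
      rw [map_neg, hfh f h1 h2] at h3
      simp at h3
    have hmat : (Matrix.of fun _ _ => h : Matrix (Fin 1) (Fin 1) W) = 0 := by
      apply T.pos_strict hp
      have he : (-(Matrix.of fun _ _ => h) : Matrix (Fin 1) (Fin 1) W)
          = Matrix.of fun _ _ => (-h) := by
        ext i j; simp
      rw [he]
      exact hn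
    have := congrFun (congrFun hmat 0) 0
    simpa using this
  set h1 : W := (2⁻¹ : ℂ) • (w + star w) with hh1
  set h2 : W := (2⁻¹ : ℂ) • (Complex.I • (star w - w)) with hh2
  have hh1s : star h1 = h1 := by
    rw [hh1, star_smul, star_add, star_star]
    simp [Complex.star_def, map_inv₀, add_comm]
  have hh2s : star h2 = h2 := by
    rw [hh2, star_smul, star_smul, star_sub, star_star]
    simp only [Complex.star_def, map_inv₀, map_ofNat, Complex.conj_I]
    module
  have hI2 : Complex.I • h2 = (-(2⁻¹) : ℂ) • (star w - w) := by
    rw [hh2, smul_smul, smul_smul]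
    congr 1
    have : Complex.I * 2⁻¹ * Complex.I = -(2⁻¹) := by
      rw [mul_comm Complex.I (2⁻¹ : ℂ), mul_assoc, Complex.I_mul_I]
      ring
    exact this
  have hw12 : w = h1 + Complex.I • h2 := by
    rw [hh1, hI2]
    module
  have main : ∀ f : W →ₗ[ℂ] ℂ, (∀ v, posElem T.pos v → 0 ≤ f v) →
      (∀ x, f (star x) = (starRingEnd ℂ) (f x)) → f h1 = 0 ∧ f h2 = 0 := by
    intro f p1 p2
    have hfw : f w = 0 := hw f p1 p2
    have ha : (f h1).im = 0 := by
      rw [← Complex.conj_eq_iff_im, ← p2 h1, hh1s]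
    have hb : (f h2).im = 0 := by
      rw [← Complex.conj_eq_iff_im, ← p2 h2, hh2s]
    have hab : f h1 + Complex.I * f h2 = 0 := by
      have he : f w = f h1 + Complex.I * f h2 := by
        rw [hw12]
        simp only [map_add, map_smul, smul_eq_mul]
      rw [← he]
      exact hfw
    have hre := congrArg Complex.re hab
    have him := congrArg Complex.im hab
    simp only [Complex.add_re, Complex.add_im, Complex.mul_re, Complex.mul_im,
      Complex.I_re, Complex.I_im, Complex.zero_re, Complex.zero_im, ha, hb] at hre him
    constructor
    · apply Complex.ext <;> simp [ha]
      linarith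
    · apply Complex.ext <;> simp [hb]
      linarith
  have e1 : h1 = 0 := key h1 hh1s fun f q1 q2 => (main f q1 q2).1
  have e2 : h2 = 0 := key h2 hh2s fun f q1 q2 => (main f q1 q2).2
  rw [hw12, e1, e2, smul_zero, add_zero]

lemma aux_dual_mem {V : Type*} [AddCommGroup V] [Module ℂ V] [StarAddMonoid V] [StarModule ℂ V]
    (S : OSStruct V) {k : ℕ} (F : Matrix (Fin k) (Fin k) (Module.Dual ℂ V))
    (h : ∀ C ∈ S.pos k, 0 ≤ ∑ a, ∑ b, F a b (C a b)) : F ∈ osDualCone S.pos k := by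
  intro m M hM
  apply aux_posSemidef_of_quad
  intro v
  rw [aux_quad_matValued]
  exact h _ (S.pos_congr _ hM)

lemma aux_unit_herm {W : Type*} [AddCommGroup W] [Module ℂ W] [StarAddMonoid W] [StarModule ℂ W]
    (T : OSStruct W) (n : ℕ) : (unitMat T.unit n).conjTranspose = unitMat T.unit n := by
  ext i j
  simp only [Matrix.conjTranspose_apply, unitMat, Matrix.of_apply]
  by_cases h : i = j
  · subst h; simp [T.unit_sa]
  · rw [if_neg h, if_neg (Ne.symm h), star_zero]

end AuxOS9

/-- A linear map between operator systems is `k`-positive iff its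
Banach-space adjoint is `k`-positive for the dual matrix orderings. -/
theorem statement0 {V W : Type} [AddCommGroup V] [Module ℂ V] [StarAddMonoid V] [StarModule ℂ V] [AddCommGroup W] [Module ℂ W] [StarAddMonoid W] [StarModule ℂ W]
    (S : OSStruct V) (T : OSStruct W) (k : ℕ) (φ : V →ₗ[ℂ] W) :
    osKPos S.pos T.pos k φ ↔
      osKPos (osDualCone T.pos) (osDualCone S.pos) k φ.dualMap := by
  constructor
  · -- forward direction
    intro hφ F hF
    apply aux_dual_mem S
    intro C hC
    have hP : mmap φ C ∈ T.pos k := hφ _ hC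
    have hPSD := hF k _ hP
    have hq := hPSD.dotProduct_mulVec_nonneg (fun p : Fin k × Fin k => if p.1 = p.2 then (1 : ℂ) else 0)
    rw [aux_quad_diag] at hq
    exact hq
  · -- backward direction
    intro hd M hM
    by_cases hk : k = 0
    · subst hk
      have he : mmap φ M = unitMat T.unit 0 := Matrix.ext fun i _ => i.elim0
      rw [he]
      exact T.unit_pos 0
    set N := mmap φ M with hNdef
    -- Step A : N is hermitian
    have hermN : N.conjTranspose = N := by
      have hent : ∀ i j, star (N j i) = N i j := by
        intro i j
        have hkey : ∀ f : W →ₗ[ℂ] ℂ, (∀ v, posElem T.pos v → 0 ≤ f v) →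
            (∀ x, f (star x) = (starRingEnd ℂ) (f x)) → f (star (N j i) - N i j) = 0 := by
          intro f p1 p2
          have hdm : (Matrix.of fun a b : Fin k =>
              if a = b then (f : Module.Dual ℂ W) else 0) ∈ osDualCone T.pos k := by
            apply aux_dual_mem T
            intro C hC
            have hterm : ∀ a : Fin k, posElem T.pos (C a a) := by
              intro a
              have h1 := T.pos_congr
                (Matrix.of fun (i' : Fin k) (_ : Fin 1) => if i' = a then (1 : ℂ) else 0) hC
              have h2 : matCongr
                  (Matrix.of fun (i' : Fin k) (_ : Fin 1) => if i' = a then (1 : ℂ) else 0) C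
                  = Matrix.of fun _ _ => C a a := by
                ext x y
                simp [matCongr, apply_ite, ite_mul, mul_ite, ite_smul, zero_smul,
                  Finset.sum_ite_eq, Finset.sum_ite_eq']
              rw [h2] at h1
              exact h1
            have hsum : (∑ a, ∑ b, (Matrix.of fun a b : Fin k =>
                if a = b then (f : Module.Dual ℂ W) else 0) a b (C a b))
                = ∑ a, f (C a a) := by
              refine Finset.sum_congr rfl fun a _ => ?_
              rw [Finset.sum_eq_single a]
              · simp
              · intro b _ hb
                simp [Ne.symm hb]
              · intro h
                exact absurd (Finset.mem_univ a) h
            rw [hsum]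
            exact Finset.sum_nonneg fun a _ => p1 _ (hterm a)
          have hdual := hd _ hdm
          have hPSD := hdual k M hM
          have hherm := hPSD.1
          set a0 : Fin k := ⟨0, Nat.pos_of_ne_zero hk⟩
          have he := congrFun (congrFun hherm (i, a0)) (j, a0)
          have he' : star (f (N j i)) = f (N i j) := by
            simpa [Matrix.conjTranspose_apply, blockify, mmap, matValued, hNdef] using he
          rw [map_sub, p2, ← Complex.star_def, he', sub_self]
        have h0 := aux_vanish T _ hkey
        have := sub_eq_zero.mp h0
        exact this
      exact Matrix.ext fun i j => hent i j
    -- Step B : archimedean + separation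
    apply T.archimedean
    intro ε hε
    by_contra hc
    have hXh : ((ε : ℂ) • unitMat T.unit k + N).conjTranspose
        = (ε : ℂ) • unitMat T.unit k + N := by
      rw [Matrix.conjTranspose_add, Matrix.conjTranspose_smul, aux_unit_herm, hermN,
        Complex.star_def, Complex.conj_ofReal]
    obtain ⟨L, hLpos, hLconj, hLre⟩ := aux_sep T ((ε : ℂ) • unitMat T.unit k + N) hXh hc
    set G : Matrix (Fin k) (Fin k) (Module.Dual ℂ W) :=
      Matrix.of fun a b => (L ∘ₗ auxStd a b : Module.Dual ℂ W) with hG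
    have hGsum : ∀ P : Matrix (Fin k) (Fin k) W, (∑ a, ∑ b, G a b (P a b)) = L P := by
      intro P
      have h1 : (∑ a, ∑ b, G a b (P a b)) = L (∑ a, ∑ b, auxStd a b (P a b)) := by
        rw [map_sum]
        refine Finset.sum_congr rfl fun a _ => ?_
        rw [map_sum]
        exact Finset.sum_congr rfl fun b _ => rfl
      rw [h1, aux_std_sum]
    have hGmem : G ∈ osDualCone T.pos k := by
      apply aux_dual_mem T
      intro C hC
      rw [hGsum]
      exact hLpos C hC
    have hdual := hd _ hGmem
    have hPSD := hdual k M hM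
    have hq := hPSD.dotProduct_mulVec_nonneg (fun p : Fin k × Fin k => if p.1 = p.2 then (1 : ℂ) else 0)
    rw [aux_quad_diag] at hq
    have hLN : (0 : ℂ) ≤ L N := by
      have he : (∑ a, ∑ b, (mmap φ.dualMap G) a b (M a b)) = L N := hGsum N
      rwa [he] at hq
    have hLU : (0 : ℂ) ≤ L (unitMat T.unit k) := hLpos _ (T.unit_pos k)
    have hsplit : (L ((ε : ℂ) • unitMat T.unit k + N)).re
        = ε * (L (unitMat T.unit k)).re + (L N).re := by
      rw [map_add, map_smul]
      simp [Complex.add_re, Complex.smul_re]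
    have h1 := (Complex.nonneg_iff.mp hLN).1
    have h2 := (Complex.nonneg_iff.mp hLU).1
    rw [hsplit] at hLre
    nlinarith
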